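/- Let Q ⊂ ℝ^d be a domain of finite measure, and P, G : ℝ → ℝ non-decreasing continuous functions. Suppose ρ_n is a sequence of measurable functions on Q such that P(ρ_n) → p̄, G(ρ_n) → ḡ, and P(ρ_n)G(ρ_n) → h̄ weakly in L¹(Q). Then p̄ · ḡ ≤ h̄ almost everywhere in Q. -/

import Mathlib

open MeasureTheory Filter Topology
open scoped ENNReal

/-- Weak convergence in L¹(μ): testing against all bounded (L^∞) functions. -/
def WeakL1Conv {α : Type*} [MeasurableSpace α] (μ : Measure α)
    (f : ℕ → α → ℝ) (F : α → ℝ) : Prop :=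
  ∀ φ : α → ℝ, MemLp φ ⊤ μ →
    Tendsto (fun n => ∫ x, f n x * φ x ∂μ) atTop (𝓝 (∫ x, F x * φ x ∂μ))

lemma wk_setIntegral_tendsto {α : Type*} [MeasurableSpace α] (μ : Measure α)
    (f : ℕ → α → ℝ) (F : α → ℝ) (hw : WeakL1Conv μ f F)
    {s : Set α} (hs : MeasurableSet s) :
    Tendsto (fun n => ∫ x in s, f n x ∂μ) atTop (𝓝 (∫ x in s, F x ∂μ)) := by
  have heq : ∀ g : α → ℝ,
      (fun x => g x * s.indicator (fun _ => (1:ℝ)) x) = s.indicator g := by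
    intro g; funext x
    by_cases hx : x ∈ s <;> simp [Set.indicator_apply, hx]
  have hφ : MemLp (s.indicator (fun _ => (1:ℝ))) ⊤ μ :=
    memLp_top_of_bound ((measurable_const.indicator hs).aestronglyMeasurable) 1
      (Eventually.of_forall fun x => by
        by_cases hx : x ∈ s <;> simp [Set.indicator_apply, hx])
  have h := hw _ hφ
  simp only [heq, integral_indicator hs] at h
  exact h

lemma bound_aux {α : Type*} [MeasurableSpace α] (μ : Measure α) [IsFiniteMeasure μ]
    (f : ℕ → α → ℝ) (F : α → ℝ) (hFint : Integrable F μ)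
    (hfint : ∀ n, Integrable (f n) μ)
    (hconv : ∀ s : Set α, MeasurableSet s →
      Tendsto (fun n => ∫ x in s, f n x ∂μ) atTop (𝓝 (∫ x in s, F x ∂μ)))
    (c : ℝ) (hb : ∀ n x, f n x ≤ c) : ∀ᵐ x ∂μ, F x ≤ c := by
  have h0 : ∀ᵐ x ∂μ, 0 ≤ c - F x := by
    apply ae_nonneg_of_forall_setIntegral_nonneg (f := fun x => c - F x) ((integrable_const c).sub hFint)
    intro s hs hμs
    have heq : ∫ x in s, (c - F x) ∂μ = (μ s).toReal * c - ∫ x in s, F x ∂μ := by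
      rw [integral_sub (show Integrable (fun _ => c) (μ.restrict s) from integrableOn_const hμs.ne enorm_ne_top) hFint.restrict,
        setIntegral_const, smul_eq_mul, measureReal_def]
    rw [heq]
    have ht : Tendsto (fun n => (μ s).toReal * c - ∫ x in s, f n x ∂μ) atTop
        (𝓝 ((μ s).toReal * c - ∫ x in s, F x ∂μ)) := tendsto_const_nhds.sub (hconv s hs)
    refine ge_of_tendsto ht (Eventually.of_forall fun n => ?_)
    have h2 : ∫ x in s, f n x ∂μ ≤ ∫ x in s, c ∂μ :=
      integral_mono (hfint n).restrict (integrableOn_const hμs.ne enorm_ne_top) fun x => hb n x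
    rw [setIntegral_const, smul_eq_mul, measureReal_def] at h2
    linarith
  filter_upwards [h0] with x hx
  linarith

lemma key_pointwise (P G : ℝ → ℝ) (hPm : Monotone P) (hPc : Continuous P)
    (hGm : Monotone G) (hGc : Continuous G) (a b h : ℝ)
    (H : ∀ q : ℚ, -((a - P q) * (b - G q)) ≤ h - a * b)
    (Ha1 : ∀ q : ℚ, (∀ t, P t ≤ (q:ℝ)) → a ≤ q)
    (Ha2 : ∀ q : ℚ, (∀ t, (q:ℝ) ≤ P t) → (q:ℝ) ≤ a)
    (Hb1 : ∀ q : ℚ, (∀ t, G t ≤ (q:ℝ)) → b ≤ q)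
    (Hb2 : ∀ q : ℚ, (∀ t, (q:ℝ) ≤ G t) → (q:ℝ) ≤ b) :
    a * b ≤ h := by
  have Hreal : ∀ t : ℝ, -((a - P t) * (b - G t)) ≤ h - a * b := by
    have hclosed : IsClosed {t : ℝ | -((a - P t) * (b - G t)) ≤ h - a * b} :=
      isClosed_le (((continuous_const.sub hPc).mul (continuous_const.sub hGc)).neg) continuous_const
    have hsub : Set.range ((↑) : ℚ → ℝ) ⊆ {t : ℝ | -((a - P t) * (b - G t)) ≤ h - a * b} := by
      rintro _ ⟨q, rfl⟩; exact H q
    intro t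
    have ht : t ∈ closure (Set.range ((↑) : ℚ → ℝ)) := by
      rw [Rat.denseRange_cast.closure_eq]; trivial
    exact hclosed.closure_subset_iff.2 hsub ht
  have hmain : ∀ ε : ℝ, 0 < ε → ∃ t : ℝ, (a - P t) * (b - G t) < ε := by
    intro ε hε
    by_contra hcon
    push_neg at hcon
    have hne : ∀ t, P t ≠ a := by
      intro t ht
      have := hcon t
      rw [ht, sub_self, zero_mul] at this
      linarith
    by_cases h1 : ∃ t, P t < a
    · by_cases h2 : ∃ t, a < P t
      · obtain ⟨t0, ht0⟩ := h1
        obtain ⟨t1, ht1⟩ := h2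
        have hle : t0 ≤ t1 := by
          by_contra hgt
          push_neg at hgt
          have := hPm hgt.le
          linarith
        obtain ⟨t, _, ht⟩ := intermediate_value_Icc hle hPc.continuousOn ⟨ht0.le, ht1.le⟩
        exact hne t ht
      · push_neg at h2
        have hPa : ∀ t, P t < a := fun t => lt_of_le_of_ne (h2 t) (hne t)
        have hGb : ∀ t, G t < b := by
          intro t
          by_contra hgb
          push_neg at hgb
          have h5 : 0 ≤ (a - P t) * (G t - b) :=
            mul_nonneg (by linarith [hPa t]) (by linarith)
          nlinarith [hcon t]
        set δ := min ε 1 with hδ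
        have hδpos : 0 < δ := lt_min hε one_pos
        have hδε : δ * δ ≤ ε := by
          calc δ * δ ≤ ε * 1 :=
            mul_le_mul (min_le_left _ _) (min_le_right _ _) hδpos.le hε.le
          _ = ε := mul_one ε
        have hP : ∃ t, a - δ < P t := by
          by_contra hc
          push_neg at hc
          obtain ⟨q, hq1, hq2⟩ := exists_rat_btwn (show a - δ < a by linarith)
          exact absurd (Ha1 q fun t => (hc t).trans hq1.le) (not_le.2 hq2)
        have hG : ∃ t, b - δ < G t := by
          by_contra hc
          push_neg at hc
          obtain ⟨q, hq1, hq2⟩ := exists_rat_btwn (show b - δ < b by linarith)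
          exact absurd (Hb1 q fun t => (hc t).trans hq1.le) (not_le.2 hq2)
        obtain ⟨t2, ht2⟩ := hP
        obtain ⟨s2, hs2⟩ := hG
        set t := max t2 s2 with htdef
        have h3 : a - δ < P t := ht2.trans_le (hPm (le_max_left _ _))
        have h4 : b - δ < G t := hs2.trans_le (hGm (le_max_right _ _))
        have h6 : 0 < δ - (a - P t) := by linarith [hPa t]
        have h7 : 0 < b - G t := by linarith [hGb t]
        nlinarith [hcon t, mul_pos h6 h7]
    · push_neg at h1
      have hPa : ∀ t, a < P t := fun t => lt_of_le_of_ne (h1 t) fun he => hne t he.symm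
      have hGb : ∀ t, b < G t := by
        intro t
        by_contra hgb
        push_neg at hgb
        have h5 : 0 ≤ (P t - a) * (b - G t) :=
          mul_nonneg (by linarith [hPa t]) (by linarith)
        nlinarith [hcon t]
      set δ := min ε 1 with hδ
      have hδpos : 0 < δ := lt_min hε one_pos
      have hδε : δ * δ ≤ ε := by
        calc δ * δ ≤ ε * 1 :=
          mul_le_mul (min_le_left _ _) (min_le_right _ _) hδpos.le hε.le
        _ = ε := mul_one ε
      have hP : ∃ t, P t < a + δ := by
        by_contra hc
        push_neg at hc
        obtain ⟨q, hq1, hq2⟩ := exists_rat_btwn (show a < a + δ by linarith)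
        exact absurd (Ha2 q fun t => hq2.le.trans (hc t)) (not_le.2 hq1)
      have hG : ∃ t, G t < b + δ := by
        by_contra hc
        push_neg at hc
        obtain ⟨q, hq1, hq2⟩ := exists_rat_btwn (show b < b + δ by linarith)
        exact absurd (Hb2 q fun t => hq2.le.trans (hc t)) (not_le.2 hq1)
      obtain ⟨t2, ht2⟩ := hP
      obtain ⟨s2, hs2⟩ := hG
      set t := min t2 s2 with htdef
      have h3 : P t < a + δ := (hPm (min_le_left _ _)).trans_lt ht2
      have h4 : G t < b + δ := (hGm (min_le_right _ _)).trans_lt hs2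
      have h6 : 0 < δ - (P t - a) := by linarith [hPa t]
      have h7 : 0 < G t - b := by linarith [hGb t]
      nlinarith [hcon t, mul_pos h6 h7]
  by_contra hab
  push_neg at hab
  obtain ⟨t, ht⟩ := hmain (a * b - h) (by linarith)
  have := Hreal t
  linarith

/-- If P, G are non-decreasing continuous, P(ρ_n) → p̄, G(ρ_n) → ḡ and
P(ρ_n)G(ρ_n) → h̄ weakly in L¹(Q), then p̄·ḡ ≤ h̄ a.e. in Q. -/
theorem stmt_7 {d : ℕ} (Q : Set (Fin d → ℝ)) (hQm : MeasurableSet Q)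
    (hQ : volume Q < ⊤) (P G : ℝ → ℝ)
    (hPmono : Monotone P) (hPcont : Continuous P)
    (hGmono : Monotone G) (hGcont : Continuous G)
    (ρ : ℕ → (Fin d → ℝ) → ℝ) (hmeas : ∀ n, AEMeasurable (ρ n) (volume.restrict Q))
    (pbar gbar hbar : (Fin d → ℝ) → ℝ)
    (hPint : ∀ n, Integrable (fun x => P (ρ n x)) (volume.restrict Q))
    (hGint : ∀ n, Integrable (fun x => G (ρ n x)) (volume.restrict Q))
    (hPGint : ∀ n, Integrable (fun x => P (ρ n x) * G (ρ n x)) (volume.restrict Q))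
    (hpbar : Integrable pbar (volume.restrict Q))
    (hgbar : Integrable gbar (volume.restrict Q))
    (hhbar : Integrable hbar (volume.restrict Q))
    (hPw : WeakL1Conv (volume.restrict Q) (fun n x => P (ρ n x)) pbar)
    (hGw : WeakL1Conv (volume.restrict Q) (fun n x => G (ρ n x)) gbar)
    (hPGw : WeakL1Conv (volume.restrict Q) (fun n x => P (ρ n x) * G (ρ n x)) hbar) :
    ∀ᵐ x ∂(volume.restrict Q), pbar x * gbar x ≤ hbar x := by
  set μ := volume.restrict Q with hμdef
  haveI : IsFiniteMeasure μ := ⟨by rwa [Measure.restrict_apply_univ]⟩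
  have hconvP : ∀ s : Set (Fin d → ℝ), MeasurableSet s →
      Tendsto (fun n => ∫ x in s, P (ρ n x) ∂μ) atTop (𝓝 (∫ x in s, pbar x ∂μ)) :=
    fun s hs => wk_setIntegral_tendsto μ _ pbar hPw hs
  have hconvG : ∀ s : Set (Fin d → ℝ), MeasurableSet s →
      Tendsto (fun n => ∫ x in s, G (ρ n x) ∂μ) atTop (𝓝 (∫ x in s, gbar x ∂μ)) :=
    fun s hs => wk_setIntegral_tendsto μ _ gbar hGw hs
  have hconvPG : ∀ s : Set (Fin d → ℝ), MeasurableSet s →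
      Tendsto (fun n => ∫ x in s, P (ρ n x) * G (ρ n x) ∂μ) atTop
        (𝓝 (∫ x in s, hbar x ∂μ)) :=
    fun s hs => wk_setIntegral_tendsto μ _ hbar hPGw hs
  -- Step A
  have stepA : ∀ q : ℚ, ∀ᵐ x ∂μ,
      0 ≤ hbar x - P q * gbar x - G q * pbar x + P q * G q := by
    intro q
    have hsplit : ∀ (A B C : (Fin d → ℝ) → ℝ), Integrable A μ → Integrable B μ →
        Integrable C μ → ∀ s : Set (Fin d → ℝ), MeasurableSet s →
        ∫ x in s, (A x - P q * B x - G q * C x + P q * G q) ∂μ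
          = ∫ x in s, A x ∂μ - P q * ∫ x in s, B x ∂μ - G q * ∫ x in s, C x ∂μ
            + (μ s).toReal * (P q * G q) := by
      intro A B C hA hB hC s hs
      have i1 : Integrable (fun x => A x - P (q:ℝ) * B x) (μ.restrict s) :=
        hA.restrict.sub (hB.restrict.const_mul _)
      have i2 : Integrable (fun x => A x - P (q:ℝ) * B x - G (q:ℝ) * C x) (μ.restrict s) :=
        i1.sub (hC.restrict.const_mul _)
      rw [integral_add i2 (integrable_const _),
        integral_sub i1 (hC.restrict.const_mul _),
        integral_sub hA.restrict (hB.restrict.const_mul _),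
        integral_const_mul, integral_const_mul, setIntegral_const, smul_eq_mul, measureReal_def]
    apply ae_nonneg_of_forall_setIntegral_nonneg
      (f := fun x => hbar x - P q * gbar x - G q * pbar x + P q * G q)
      (((hhbar.sub (hgbar.const_mul (P q))).sub (hpbar.const_mul (G q))).add
        (integrable_const _))
    intro s hs hμs
    rw [hsplit _ _ _ hhbar hgbar hpbar s hs]
    have ht : Tendsto (fun n => ∫ x in s, P (ρ n x) * G (ρ n x) ∂μ
        - P q * ∫ x in s, G (ρ n x) ∂μ - G q * ∫ x in s, P (ρ n x) ∂μ
        + (μ s).toReal * (P q * G q)) atTop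
        (𝓝 (∫ x in s, hbar x ∂μ - P q * ∫ x in s, gbar x ∂μ
          - G q * ∫ x in s, pbar x ∂μ + (μ s).toReal * (P q * G q))) :=
      (((hconvPG s hs).sub ((hconvG s hs).const_mul _)).sub
        ((hconvP s hs).const_mul _)).add_const _
    refine ge_of_tendsto ht (Eventually.of_forall fun n => ?_)
    rw [← hsplit _ _ _ (hPGint n) (hGint n) (hPint n) s hs]
    refine setIntegral_nonneg hs fun x _ => ?_
    rcases le_total (ρ n x) ((q:ℝ)) with h' | h'
    · nlinarith [mul_nonneg (sub_nonneg.2 (hPmono h')) (sub_nonneg.2 (hGmono h'))]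
    · nlinarith [mul_nonneg (sub_nonneg.2 (hPmono h')) (sub_nonneg.2 (hGmono h'))]
  -- Step B: bounds
  have hBP1 : ∀ q : ℚ, (∀ t, P t ≤ (q:ℝ)) → ∀ᵐ x ∂μ, pbar x ≤ q := fun q hq =>
    bound_aux μ _ pbar hpbar hPint hconvP (q:ℝ) (fun n x => hq (ρ n x))
  have hBG1 : ∀ q : ℚ, (∀ t, G t ≤ (q:ℝ)) → ∀ᵐ x ∂μ, gbar x ≤ q := fun q hq =>
    bound_aux μ _ gbar hgbar hGint hconvG (q:ℝ) (fun n x => hq (ρ n x))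
  have hBP2 : ∀ q : ℚ, (∀ t, (q:ℝ) ≤ P t) → ∀ᵐ x ∂μ, (q:ℝ) ≤ pbar x := by
    intro q hq
    have h := bound_aux μ (fun n x => -(P (ρ n x))) (fun x => -(pbar x)) hpbar.neg
      (fun n => (hPint n).neg)
      (fun s hs => by simpa [integral_neg] using (hconvP s hs).neg)
      (-(q:ℝ)) (fun n x => neg_le_neg (hq (ρ n x)))
    filter_upwards [h] with x hx
    linarith
  have hBG2 : ∀ q : ℚ, (∀ t, (q:ℝ) ≤ G t) → ∀ᵐ x ∂μ, (q:ℝ) ≤ gbar x := by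
    intro q hq
    have h := bound_aux μ (fun n x => -(G (ρ n x))) (fun x => -(gbar x)) hgbar.neg
      (fun n => (hGint n).neg)
      (fun s hs => by simpa [integral_neg] using (hconvG s hs).neg)
      (-(q:ℝ)) (fun n x => neg_le_neg (hq (ρ n x)))
    filter_upwards [h] with x hx
    linarith
  -- combine
  have hA' : ∀ᵐ x ∂μ, ∀ q : ℚ,
      0 ≤ hbar x - P q * gbar x - G q * pbar x + P q * G q := ae_all_iff.2 stepA
  have hB1' : ∀ᵐ x ∂μ, ∀ q : ℚ, (∀ t, P t ≤ (q:ℝ)) → pbar x ≤ q := by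
    rw [ae_all_iff]
    intro q
    by_cases hc : ∀ t, P t ≤ (q:ℝ)
    · filter_upwards [hBP1 q hc] with x hx _; exact hx
    · filter_upwards with x hx; exact absurd hx hc
  have hB2' : ∀ᵐ x ∂μ, ∀ q : ℚ, (∀ t, (q:ℝ) ≤ P t) → (q:ℝ) ≤ pbar x := by
    rw [ae_all_iff]
    intro q
    by_cases hc : ∀ t, (q:ℝ) ≤ P t
    · filter_upwards [hBP2 q hc] with x hx _; exact hx
    · filter_upwards with x hx; exact absurd hx hc
  have hC1' : ∀ᵐ x ∂μ, ∀ q : ℚ, (∀ t, G t ≤ (q:ℝ)) → gbar x ≤ q := by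
    rw [ae_all_iff]
    intro q
    by_cases hc : ∀ t, G t ≤ (q:ℝ)
    · filter_upwards [hBG1 q hc] with x hx _; exact hx
    · filter_upwards with x hx; exact absurd hx hc
  have hC2' : ∀ᵐ x ∂μ, ∀ q : ℚ, (∀ t, (q:ℝ) ≤ G t) → (q:ℝ) ≤ gbar x := by
    rw [ae_all_iff]
    intro q
    by_cases hc : ∀ t, (q:ℝ) ≤ G t
    · filter_upwards [hBG2 q hc] with x hx _; exact hx
    · filter_upwards with x hx; exact absurd hx hc
  filter_upwards [hA', hB1', hB2', hC1', hC2'] with x h0 h1 h2 h3 h4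
  exact key_pointwise P G hPmono hPcont hGmono hGcont (pbar x) (gbar x) (hbar x)
    (fun q => by nlinarith [h0 q]) h1 h2 h3 h4
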